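/- Let P := ℕ ∖ {1} = {0, 2, 3, 4, …}, an additive submonoid of ℤ. Then the subsets 2+P, 3+P, 5+P, 6+P and (2+P) ∩ (3+P) of P are constructible ideals of P, one has (2+P) ∩ (3+P) = (5+P) ∪ (6+P), and yet (2+P) ∩ (3+P) ≠ 5+P and (2+P) ∩ (3+P) ≠ 6+P. In particular, P does not satisfy independence. -/

import Mathlib

noncomputable section
set_option synthInstance.maxHeartbeats 1000000
set_option maxHeartbeats 1000000
set_option linter.unusedVariables false

open scoped ENNReal

/-- `ℓ²(ι)` with complex coefficients. -/
abbrev l2 (ι : Type*) : Type _ := lp (fun _ : ι => ℂ) 2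

/-- The canonical orthonormal basis vector `δ_i` of `ℓ²(ι)`. -/
noncomputable def ket {ι : Type*} (i : ι) : l2 ι :=
  haveI := Classical.decEq ι
  lp.single 2 i 1

/-- The additive submonoid `P = ℕ ∖ {1} = {0, 2, 3, 4, …}` of `ℤ`. -/
def Pns : AddSubmonoid ℤ where
  carrier := {n : ℤ | 0 ≤ n ∧ n ≠ 1}
  zero_mem' := ⟨le_refl 0, by norm_num⟩
  add_mem' := by
    rintro a b ⟨ha0, ha1⟩ ⟨hb0, hb1⟩
    exact ⟨by omega, by omega⟩

lemma mem_Pns {n : ℤ} : n ∈ Pns ↔ 0 ≤ n ∧ n ≠ 1 := Iff.rfl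

/-- Words of even length over `Pns`, as lists of consecutive pairs. -/
abbrev WordA := List (Pns × Pns)

/-- `L̇_a = L_{p₁}^* L_{p₂} ⋯ L_{p_{2k-1}}^* L_{p_{2k}}`. -/
def dottedA (L : Pns → (l2 Pns →L[ℂ] l2 Pns)) (w : WordA) : l2 Pns →L[ℂ] l2 Pns :=
  (w.map (fun pq => star (L pq.1) * L pq.2)).prod

/-- The constructible ideal `K(a) = {p ∈ P : L̇_a δ_p = δ_p}`. -/
def KIdealA (L : Pns → (l2 Pns →L[ℂ] l2 Pns)) (w : WordA) : Set Pns :=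
  {p : Pns | dottedA L w (ket p) = ket p}

def pel (n : ℤ) (h : 0 ≤ n ∧ n ≠ 1) : Pns := ⟨n, mem_Pns.mpr h⟩
def p2 : Pns := pel 2 (by norm_num)
def p3 : Pns := pel 3 (by norm_num)
def p5 : Pns := pel 5 (by norm_num)
def p6 : Pns := pel 6 (by norm_num)

/-- The word `((0,k),(k,0))`, whose constructible ideal is `k + P`. -/
def wd (k : Pns) : WordA := [(0, k), (k, 0)]

/-- The word `((0,2),(2,0),(0,3),(3,0))`, whose constructible ideal is `(2+P) ∩ (3+P)`. -/
def w23 : WordA := [(0, p2), (p2, 0), (0, p3), (p3, 0)]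

/-- The set `k + P ⊆ P`. -/
def SP (k : ℤ) : Set Pns := {x : Pns | ∃ y : Pns, (x : ℤ) = k + (y : ℤ)}

-- auxiliary lemmas

lemma ket_apply {ι : Type*} [DecidableEq ι] (i j : ι) :
    (ket i : ∀ _ : ι, ℂ) j = if j = i then 1 else 0 := by
  classical
  simp [ket, lp.single_apply, Pi.single_apply]

lemma ket_ne_zero {ι : Type*} (i : ι) : (ket i : l2 ι) ≠ 0 := by
  classical
  intro h
  have := congrFun (congrArg (fun f : l2 ι => (f : ∀ _ : ι, ℂ)) h) i
  simp [ket_apply] at this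

lemma ket_inj {ι : Type*} {i j : ι} (h : (ket i : l2 ι) = ket j) : i = j := by
  classical
  by_contra hne
  have := congrFun (congrArg (fun f : l2 ι => (f : ∀ _ : ι, ℂ)) h) i
  simp [ket_apply, hne] at this

open Classical in
lemma Lstar (L : Pns → (l2 Pns →L[ℂ] l2 Pns))
    (hL : ∀ p q : Pns, L p (ket q) = ket (p + q)) (p q : Pns) :
    (star (L p)) (ket q) =
      if h : ((q : ℤ) - (p : ℤ)) ∈ Pns then ket (⟨(q : ℤ) - (p : ℤ), h⟩ : Pns) else 0 := by
  classical
  apply lp.ext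
  funext r
  have hcoord : ∀ (A : l2 Pns →L[ℂ] l2 Pns) (x : Pns),
      ((star A) (ket q) : ∀ _ : Pns, ℂ) x = @inner ℂ _ _ (A (ket x)) (ket q) := by
    intro A x
    rw [← ContinuousLinearMap.adjoint_inner_right, ContinuousLinearMap.star_eq_adjoint]
    simp [ket, lp.inner_single_left]
  rw [hcoord, hL]
  rw [show (@inner ℂ _ _ (ket (p + r)) (ket q) : ℂ) = (ket q : ∀ _ : Pns, ℂ) (p + r) by
    simp [ket, lp.inner_single_left]]
  by_cases h : ((q : ℤ) - (p : ℤ)) ∈ Pns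
  · rw [dif_pos h, ket_apply, ket_apply]
    have : (p + r = q) ↔ (r = (⟨(q : ℤ) - (p : ℤ), h⟩ : Pns)) := by
      constructor
      · intro he; apply Subtype.ext
        have := congrArg (fun z : Pns => (z : ℤ)) he
        simp at this; simp; omega
      · intro he; apply Subtype.ext
        have := congrArg (fun z : Pns => (z : ℤ)) he
        simp at this; simp; omega
    simp only [this]
  · rw [dif_neg h]
    have : ¬ (p + r = q) := by
      intro he
      apply h
      have := congrArg (fun z : Pns => (z : ℤ)) he
      simp at this
      have hr := r.2
      rw [mem_Pns] at hr ⊢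
      omega
    simp [ket_apply, this, lp.coeFn_zero]

lemma L_zero (L : Pns → (l2 Pns →L[ℂ] l2 Pns))
    (hL : ∀ p q : Pns, L p (ket q) = ket (p + q)) (q : Pns) :
    L 0 (ket q) = ket q := by rw [hL, zero_add]

lemma Lstar_zero (L : Pns → (l2 Pns →L[ℂ] l2 Pns))
    (hL : ∀ p q : Pns, L p (ket q) = ket (p + q)) (q : Pns) :
    (star (L 0)) (ket q) = ket q := by
  rw [Lstar L hL]
  rw [dif_pos (by simp)]
  congr 1
  apply Subtype.ext
  simp

lemma Kwd (L : Pns → (l2 Pns →L[ℂ] l2 Pns))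
    (hL : ∀ p q : Pns, L p (ket q) = ket (p + q)) (k : Pns) :
    KIdealA L (wd k) = {p : Pns | ((p : ℤ) - (k : ℤ)) ∈ Pns} := by
  ext p
  simp only [KIdealA, wd, dottedA, List.map, List.prod_cons, List.prod_nil, mul_one,
    Set.mem_setOf_eq, ContinuousLinearMap.mul_apply]
  rw [L_zero L hL, Lstar L hL]
  by_cases h : ((p : ℤ) - (k : ℤ)) ∈ Pns
  · rw [dif_pos h, hL, Lstar_zero L hL]
    have : k + (⟨(p : ℤ) - (k : ℤ), h⟩ : Pns) = p := by apply Subtype.ext; simp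
    rw [this]
    simp [h]
  · rw [dif_neg h]
    simp only [map_zero]
    constructor
    · intro he; exact absurd he.symm (ket_ne_zero p)
    · intro he; exact absurd he h

lemma Kw23 (L : Pns → (l2 Pns →L[ℂ] l2 Pns))
    (hL : ∀ p q : Pns, L p (ket q) = ket (p + q)) :
    KIdealA L w23 = {p : Pns | ((p : ℤ) - 2) ∈ Pns ∧ ((p : ℤ) - 3) ∈ Pns} := by
  ext p
  simp only [KIdealA, w23, dottedA, List.map, List.prod_cons, List.prod_nil, mul_one,
    Set.mem_setOf_eq, ContinuousLinearMap.mul_apply]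
  rw [L_zero L hL, Lstar L hL]
  have hp3 : ((p3 : Pns) : ℤ) = 3 := rfl
  have hp2 : ((p2 : Pns) : ℤ) = 2 := rfl
  rw [hp3]
  by_cases h3 : ((p : ℤ) - 3) ∈ Pns
  · rw [dif_pos h3, hL]
    have e3 : p3 + (⟨(p : ℤ) - 3, h3⟩ : Pns) = p := by apply Subtype.ext; simp [hp3]
    rw [e3, Lstar_zero L hL, L_zero L hL, Lstar L hL, hp2]
    by_cases h2 : ((p : ℤ) - 2) ∈ Pns
    · rw [dif_pos h2, hL]
      have e2 : p2 + (⟨(p : ℤ) - 2, h2⟩ : Pns) = p := by apply Subtype.ext; simp [hp2]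
      rw [e2, Lstar_zero L hL]
      simp [h2, h3]
    · rw [dif_neg h2]
      simp only [map_zero]
      constructor
      · intro he; exact absurd he.symm (ket_ne_zero p)
      · intro he; exact absurd he.1 h2
  · rw [dif_neg h3]
    simp only [map_zero]
    constructor
    · intro he; exact absurd he.symm (ket_ne_zero p)
    · intro he; exact absurd he.2 h3

lemma mem_SP {k : ℤ} (hk : 0 ≤ k) {x : Pns} :
    x ∈ SP k ↔ k ≤ (x : ℤ) ∧ (x : ℤ) ≠ k + 1 := by
  constructor
  · rintro ⟨y, hy⟩
    have := y.2; rw [mem_Pns] at this; omega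
  · rintro ⟨h1, h2⟩
    exact ⟨⟨(x : ℤ) - k, mem_Pns.mpr (by omega)⟩, by simp⟩

lemma SPwd {k : ℤ} (hk : 0 ≤ k) : {p : Pns | ((p : ℤ) - k) ∈ Pns} = SP k := by
  ext p
  rw [Set.mem_setOf_eq, mem_Pns, mem_SP hk]
  omega

/-- **(Example 6.1: `P = ℕ ∖ {1}` does not satisfy independence.)**
The sets `2+P, 3+P, 5+P, 6+P` and `(2+P) ∩ (3+P)` are constructible ideals of `P`,
`(2+P) ∩ (3+P) = (5+P) ∪ (6+P)`, yet `(2+P) ∩ (3+P)` is neither `5+P` nor `6+P`.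
In particular `P` does not satisfy independence. -/
theorem nat_without_one_not_independent
    (L : Pns → (l2 Pns →L[ℂ] l2 Pns))
    (hL : ∀ p q : Pns, L p (ket q) = ket (p + q)) :
    (KIdealA L (wd p2) = SP 2) ∧ (KIdealA L (wd p3) = SP 3) ∧
    (KIdealA L (wd p5) = SP 5) ∧ (KIdealA L (wd p6) = SP 6) ∧
    (KIdealA L w23 = SP 2 ∩ SP 3) ∧
    (SP 2 ∩ SP 3 = SP 5 ∪ SP 6) ∧
    (SP 2 ∩ SP 3 ≠ SP 5) ∧ (SP 2 ∩ SP 3 ≠ SP 6) ∧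
    ¬ (∀ (a : WordA) (n : ℕ) (b : Fin n → WordA), 1 ≤ n →
        KIdealA L a = ⋃ i, KIdealA L (b i) →
        ∃ i, KIdealA L a = KIdealA L (b i)) := by
  have h2 : KIdealA L (wd p2) = SP 2 := by rw [Kwd L hL]; exact SPwd p2.2.1
  have h3 : KIdealA L (wd p3) = SP 3 := by rw [Kwd L hL]; exact SPwd p3.2.1
  have h5 : KIdealA L (wd p5) = SP 5 := by rw [Kwd L hL]; exact SPwd p5.2.1
  have h6 : KIdealA L (wd p6) = SP 6 := by rw [Kwd L hL]; exact SPwd p6.2.1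
  have h23 : KIdealA L w23 = SP 2 ∩ SP 3 := by
    rw [Kw23 L hL]
    ext p
    rw [Set.mem_setOf_eq, Set.mem_inter_iff, mem_SP (by norm_num), mem_SP (by norm_num),
      mem_Pns, mem_Pns]
    omega
  have p5mem : (p5 : Pns) ∈ SP 2 ∩ SP 3 := by
    rw [Set.mem_inter_iff, mem_SP (by norm_num), mem_SP (by norm_num)]
    constructor <;> constructor <;> norm_num [p5, pel]
  have p6mem : (p6 : Pns) ∈ SP 2 ∩ SP 3 := by
    rw [Set.mem_inter_iff, mem_SP (by norm_num), mem_SP (by norm_num)]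
    constructor <;> constructor <;> norm_num [p6, pel]
  have hu : SP 2 ∩ SP 3 = SP 5 ∪ SP 6 := by
    ext p
    rw [Set.mem_inter_iff, Set.mem_union, mem_SP (by norm_num), mem_SP (by norm_num),
      mem_SP (by norm_num), mem_SP (by norm_num)]
    omega
  have hne5 : SP 2 ∩ SP 3 ≠ SP 5 := by
    intro h
    have : (p6 : Pns) ∈ SP 5 := h ▸ p6mem
    rw [mem_SP (by norm_num)] at this
    norm_num [p6, pel] at this
  have hne6 : SP 2 ∩ SP 3 ≠ SP 6 := by
    intro h
    have : (p5 : Pns) ∈ SP 6 := h ▸ p5mem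
    rw [mem_SP (by norm_num)] at this
    norm_num [p5, pel] at this
  refine ⟨h2, h3, h5, h6, h23, hu, hne5, hne6, ?_⟩
  intro hind
  have := hind w23 2 ![wd p5, wd p6] (by norm_num) ?_
  · obtain ⟨i, hi⟩ := this
    fin_cases i
    · rw [h23] at hi
      exact hne5 (hi.trans h5)
    · rw [h23] at hi
      exact hne6 (hi.trans h6)
  · rw [h23, hu]
    ext p
    simp only [Set.mem_iUnion, Set.mem_union]
    constructor
    · rintro (h | h)
      · exact ⟨0, (h5.symm ▸ h : p ∈ KIdealA L (wd p5))⟩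
      · exact ⟨1, (h6.symm ▸ h : p ∈ KIdealA L (wd p6))⟩
    · rintro ⟨i, hi⟩
      fin_cases i
      · left; exact h5 ▸ (show p ∈ KIdealA L (wd p5) from hi)
      · right; exact h6 ▸ (show p ∈ KIdealA L (wd p6) from hi)

end
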